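/- Let H be a complex Hilbert space, U : H → H unitary, P an orthogonal projection, and suppose Φ := U*PU − P has finite rank. Then ker(Φ − 1) and ker(Φ + 1) are finite-dimensional, and for every Hilbert (orthonormal) basis (e_i) of H the family ⟪e_i, (1 − 2P)Φ² e_i⟫ is summable with sum ∑_i ⟪e_i, (1 − 2P)Φ² e_i⟫ = dim ker(Φ − 1) − dim ker(Φ + 1); that is, the supertrace trace((P^⊥ − P)Φ²) equals the index ind(Φ). -/

import Mathlib

set_option maxHeartbeats 1000000

open ContinuousLinearMap

local notation "⟪" x ", " y "⟫" => @inner ℂ _ _ x y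

/-- Trace of a finite-rank operator via an arbitrary Hilbert basis: if the range of `T`
lies in a subspace `V` with (finite) orthonormal basis `v`, then for every Hilbert
basis `e` the diagonal sum converges to `∑ k, ⟪v k, T (v k)⟫`. -/
lemma hasSum_inner_diag {H : Type*} [NormedAddCommGroup H] [InnerProductSpace ℂ H]
    [CompleteSpace H] (T : H →L[ℂ] H) {N : ℕ} {V : Submodule ℂ H}
    (v : OrthonormalBasis (Fin N) ℂ V) (hrange : ∀ x, T x ∈ V)
    {ι : Type*} (e : HilbertBasis ι ℂ H) :
    HasSum (fun i => ⟪e i, T (e i)⟫) (∑ k, ⟪(v k : H), T (v k)⟫) := by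
  have expand : ∀ x : H, ⟪x, T x⟫ = ∑ k, ⟪adjoint T (v k : H), x⟫ * ⟪x, (v k : H)⟫ := by
    intro x
    have h1 : ((∑ k, (⟪(v k : H), T x⟫ • v k : V) : V) : H) = T x := by
      have := v.sum_repr (⟨T x, hrange x⟩ : V)
      have h2 : ∀ k, v.repr (⟨T x, hrange x⟩ : V) k = ⟪(v k : H), T x⟫ := by
        intro k
        rw [v.repr_apply_apply]
        rfl
      simp_rw [h2] at this
      rw [this]
    calc ⟪x, T x⟫ = ⟪x, ((∑ k, (⟪(v k : H), T x⟫ • v k : V) : V) : H)⟫ := by rw [h1]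
      _ = ∑ k, ⟪(v k : H), T x⟫ * ⟪x, (v k : H)⟫ := by
          push_cast
          rw [inner_sum]
          congr 1; ext k
          rw [inner_smul_right]
      _ = ∑ k, ⟪adjoint T (v k : H), x⟫ * ⟪x, (v k : H)⟫ := by
          congr 1; ext k
          rw [adjoint_inner_left]
  have key : ∀ k : Fin N, HasSum (fun i => ⟪adjoint T (v k : H), e i⟫ * ⟪e i, (v k : H)⟫)
      ⟪(v k : H), T (v k : H)⟫ := by
    intro k
    have := e.hasSum_inner_mul_inner (adjoint T (v k : H)) (v k : H)
    rwa [adjoint_inner_left] at this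
  have := hasSum_sum (s := Finset.univ) (fun k _ => key k)
  simp_rw [← expand] at this
  exact this

/-- If the flux `Φ = U*PU − P` of a unitary `U` through an orthogonal
projection `P` has finite rank, then `ker(Φ−1)` and `ker(Φ+1)` are finite dimensional, and for
every Hilbert basis `(e i)` of `H` the supertrace `trace((P⊥ − P)Φ²) = ∑ᵢ ⟪eᵢ, (1−2P)Φ² eᵢ⟫`
converges to the index `ind(Φ) = dim ker(Φ−1) − dim ker(Φ+1)`. -/
theorem stmt_3 {H : Type*} [NormedAddCommGroup H] [InnerProductSpace ℂ H] [CompleteSpace H]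
    (U P : H →L[ℂ] H)
    (hU1 : adjoint U * U = 1) (hU2 : U * adjoint U = 1)
    (hPsa : IsSelfAdjoint P) (hPidem : P * P = P)
    (Φ : H →L[ℂ] H) (hΦ : Φ = adjoint U * P * U - P)
    (hfin : FiniteDimensional ℂ (LinearMap.range (Φ : H →ₗ[ℂ] H))) :
    FiniteDimensional ℂ (LinearMap.ker ((Φ - 1 : H →L[ℂ] H) : H →ₗ[ℂ] H)) ∧
    FiniteDimensional ℂ (LinearMap.ker ((Φ + 1 : H →L[ℂ] H) : H →ₗ[ℂ] H)) ∧
    ∀ (ι : Type*) (e : HilbertBasis ι ℂ H),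
      HasSum (fun i => @inner ℂ _ _ (e i) ((((1 - (2 : ℂ) • P) * Φ ^ 2 : H →L[ℂ] H)) (e i)))
        (((Module.finrank ℂ (LinearMap.ker ((Φ - 1 : H →L[ℂ] H) : H →ₗ[ℂ] H)) : ℤ)
          - (Module.finrank ℂ (LinearMap.ker ((Φ + 1 : H →L[ℂ] H) : H →ₗ[ℂ] H)) : ℤ) : ℤ) : ℂ) := by
  classical
  set Q : H →L[ℂ] H := adjoint U * P * U with hQdef
  have hQidem : Q * Q = Q := by
    rw [hQdef]
    simp only [mul_assoc]
    rw [← mul_assoc U (adjoint U), hU2, one_mul, ← mul_assoc P P, hPidem]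
  have hQsa : IsSelfAdjoint Q := by
    rw [hQdef, ← star_eq_adjoint U]
    simp [IsSelfAdjoint, star_mul, star_star, hPsa.star_eq, mul_assoc]
  have hΦsa : IsSelfAdjoint Φ := hΦ ▸ (hQsa.sub hPsa)
  have hsym : (Φ : H →ₗ[ℂ] H).IsSymmetric := hΦsa.isSymmetric
  have hsymC : ∀ a b : H, ⟪Φ a, b⟫ = ⟪a, Φ b⟫ := fun a b => hsym a b
  have hΦQP : Φ = Q - P := hΦ
  set A : H →L[ℂ] H := 1 - (2:ℂ) • P with hAdef
  have key : A * Φ + Φ * A = (2:ℂ) • (Φ * Φ) := by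
    rw [hAdef, hΦQP]
    simp only [sub_mul, mul_sub, one_mul, mul_one, smul_mul_assoc, mul_smul_comm,
      hPidem, hQidem, smul_sub]
    module
  set B : H →L[ℂ] H := P + Q - 1 with hBdef
  have hBΦ : Φ * B = - (B * Φ) := by
    rw [hBdef, hΦQP]
    simp only [sub_mul, mul_sub, add_mul, mul_add, one_mul, mul_one, hPidem, hQidem]
    module
  have hB2 : B * B = 1 - Φ * Φ := by
    rw [hBdef, hΦQP]
    simp only [sub_mul, mul_sub, add_mul, mul_add, one_mul, mul_one, hPidem, hQidem]
    module
  -- membership in eigenspace-kernels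
  have memiff : ∀ (s' : ℂ) (y : H), y ∈ LinearMap.ker ((Φ - s' • 1 : H →L[ℂ] H) : H →ₗ[ℂ] H) ↔ Φ y = s' • y := by
    intro s' y
    constructor
    · intro hy
      have : Φ y - s' • y = 0 := by
        simpa [LinearMap.mem_ker, sub_apply, smul_apply, one_apply_eq_self] using hy
      rwa [sub_eq_zero] at this
    · intro hy
      have : (Φ - s' • 1) y = 0 := by
        rw [sub_apply, smul_apply, one_apply_eq_self, hy, sub_self]
      simpa [LinearMap.mem_ker, sub_apply, smul_apply, one_apply_eq_self] using this
  -- the range of Φ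
  set V : Submodule ℂ H := LinearMap.range (Φ : H →ₗ[ℂ] H) with hVdef
  haveI : FiniteDimensional ℂ V := hfin
  have hker1 : LinearMap.ker ((Φ - 1 : H →L[ℂ] H) : H →ₗ[ℂ] H) ≤ V := by
    intro x hx
    have hx' : Φ x - x = 0 := by
      simpa [LinearMap.mem_ker, sub_apply, one_apply_eq_self] using hx
    exact ⟨x, by rw [sub_eq_zero] at hx'; exact hx'⟩
  have hker2 : LinearMap.ker ((Φ + 1 : H →L[ℂ] H) : H →ₗ[ℂ] H) ≤ V := by
    intro x hx
    have hx' : Φ x + x = 0 := by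
      simpa [LinearMap.mem_ker, add_apply, one_apply_eq_self] using hx
    exact ⟨-x, by rw [ContinuousLinearMap.coe_coe, map_neg, eq_neg_of_add_eq_zero_left hx', neg_neg]⟩
  refine ⟨Submodule.finiteDimensional_of_le hker1, Submodule.finiteDimensional_of_le hker2, ?_⟩
  intro ι e
  -- the operator (1-2P)Φ² maps into V
  set T : H →L[ℂ] H := A * Φ ^ 2 with hTdef
  have hrange : ∀ x, T x ∈ V := by
    intro x
    refine ⟨(2:ℂ) • Φ (Φ x) - A (Φ x), ?_⟩
    have h := congrArg (fun S : H →L[ℂ] H => S (Φ x)) key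
    simp only [add_apply, mul_apply_eq_comp, smul_apply] at h
    have hT : T x = A (Φ (Φ x)) := by
      simp [hTdef, pow_two, mul_apply_eq_comp]
    rw [ContinuousLinearMap.coe_coe, hT, map_sub, map_smul, ← h]
    abel
  -- eigen-analysis of Φ on V
  set N : ℕ := Module.finrank ℂ V with hNdef
  have hΦV : ∀ x ∈ V, Φ x ∈ V := fun x _ => ⟨x, rfl⟩
  set c : V →ₗ[ℂ] V := (Φ : H →ₗ[ℂ] H).restrict hΦV with hcdef
  have hc : c.IsSymmetric := by
    intro x y
    have := hsym (x : H) (y : H)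
    simpa [hcdef, Submodule.coe_inner, LinearMap.restrict_apply] using this
  set u := hc.eigenvectorBasis rfl with hudef
  set μ : Fin N → ℝ := hc.eigenvalues rfl with hμdef
  have hu : ∀ k, Φ (u k : H) = ((μ k : ℂ)) • ((u k : H)) := by
    intro k
    have h := hc.apply_eigenvectorBasis rfl k
    have h2 := congrArg (Subtype.val) h
    exact h2
  have hunorm : ∀ k, ⟪(u k : H), (u k : H)⟫ = 1 := by
    intro k
    have := orthonormal_iff_ite.mp u.orthonormal k k
    rw [if_pos rfl] at this
    exact this
  -- the diagonal entries in the eigenbasis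
  have hdiag : ∀ k, ⟪(u k : H), T (u k : H)⟫ = ((μ k : ℂ)) ^ 3 := by
    intro k
    set x : H := (u k : H) with hxdef
    set t : ℂ := (μ k : ℂ) with htdef
    have hΦx : Φ x = t • x := hu k
    have hΦ2x : Φ (Φ x) = t ^ 2 • x := by
      rw [hΦx, map_smul, hΦx, smul_smul, ← pow_two]
    have hconj : (starRingEnd ℂ) t = t := by
      rw [htdef]; exact Complex.conj_ofReal _
    have h1 : t * ⟪x, A x⟫ = t ^ 2 := by
      have h := congrArg (fun S : H →L[ℂ] H => ⟪x, S x⟫) key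
      simp only [add_apply, mul_apply_eq_comp, smul_apply] at h
      rw [hΦ2x, hΦx, map_smul, inner_add_right, inner_smul_right, inner_smul_right,
        inner_smul_right, hunorm k, mul_one] at h
      have h2 : ⟪x, Φ (A x)⟫ = t * ⟪x, A x⟫ := by
        rw [← hsymC x (A x), hΦx, inner_smul_left, hconj]
      rw [h2] at h
      have h3 : (2:ℂ) * (t * ⟪x, A x⟫) = 2 * t ^ 2 := by
        calc (2:ℂ) * (t * ⟪x, A x⟫) = t * ⟪x, A x⟫ + t * ⟪x, A x⟫ := by ring
          _ = t ^ 2 * 2 := by rw [h]; ring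
          _ = 2 * t ^ 2 := by ring
      exact mul_left_cancel₀ two_ne_zero h3
    have hTx : T x = A (Φ (Φ x)) := by simp [hTdef, pow_two, mul_apply_eq_comp]
    rw [hTx, hΦ2x, map_smul, inner_smul_right]
    calc t ^ 2 * ⟪x, A x⟫ = t * (t * ⟪x, A x⟫) := by ring
      _ = t * t ^ 2 := by rw [h1]
      _ = t ^ 3 := by ring
  -- counting eigenvalues
  set cnt : ℝ → ℕ := fun t => (Finset.univ.filter fun k => μ k = t).card with hcntdef
  -- kernels as spans of eigenvectors
  have hker_count : ∀ t : ℝ, t ≠ 0 →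
      Module.finrank ℂ (LinearMap.ker ((Φ - (t : ℂ) • 1 : H →L[ℂ] H) : H →ₗ[ℂ] H)) = cnt t := by
    intro t ht
    set F : {k : Fin N // μ k = t} → H := fun k => ((u k : V) : H) with hFdef
    have hFo : Orthonormal ℂ F := by
      rw [orthonormal_iff_ite]
      intro i j
      have hij := orthonormal_iff_ite.mp u.orthonormal (i : Fin N) (j : Fin N)
      have hFi : ⟪F i, F j⟫ = if (i : Fin N) = (j : Fin N) then 1 else 0 := by
        rw [hFdef]
        simp only [← Submodule.coe_inner]
        exact hij
      rw [hFi]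
      by_cases h : (i : Fin N) = (j : Fin N)
      · rw [if_pos h, if_pos (Subtype.ext h)]
      · rw [if_neg h, if_neg (fun hij' : i = j => h (congrArg Subtype.val hij'))]
    have hspan : LinearMap.ker ((Φ - (t : ℂ) • 1 : H →L[ℂ] H) : H →ₗ[ℂ] H) = Submodule.span ℂ (Set.range F) := by
      apply le_antisymm
      · intro x hx
        have hΦx : Φ x = (t : ℂ) • x := (memiff _ _).mp hx
        have hxV : x ∈ V := by
          refine ⟨(t:ℂ)⁻¹ • x, ?_⟩
          rw [ContinuousLinearMap.coe_coe, map_smul, hΦx, smul_smul, inv_mul_cancel₀ (by exact_mod_cast ht), one_smul]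
        have hrep : x = ∑ k, ⟪(u k : H), x⟫ • ((u k : V) : H) := by
          have hr := u.sum_repr (⟨x, hxV⟩ : V)
          have h2 : ∀ k, u.repr (⟨x, hxV⟩ : V) k = ⟪(u k : H), x⟫ := by
            intro k; rw [u.repr_apply_apply]; rfl
          simp_rw [h2] at hr
          have := congrArg (fun z : V => (z : H)) hr
          push_cast at this
          exact this.symm
        rw [hrep]
        apply Submodule.sum_mem
        intro k _
        by_cases hk : μ k = t
        · exact Submodule.smul_mem _ _ (Submodule.subset_span ⟨⟨k, hk⟩, rfl⟩)
        · have hcoef : ⟪(u k : H), x⟫ = 0 := by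
            have e1 : ⟪(u k : H), Φ x⟫ = (t:ℂ) * ⟪(u k : H), x⟫ := by
              rw [hΦx, inner_smul_right]
            have e2 : ⟪(u k : H), Φ x⟫ = (μ k : ℂ) * ⟪(u k : H), x⟫ := by
              rw [← hsymC (u k : H) x, hu k, inner_smul_left, Complex.conj_ofReal]
            have e3 : ((μ k : ℂ) - t) * ⟪(u k : H), x⟫ = 0 := by
              rw [sub_mul, ← e2, e1]; ring
            rcases mul_eq_zero.mp e3 with h | h
            · exfalso; apply hk
              have : ((μ k : ℝ) : ℂ) = ((t : ℝ) : ℂ) := by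
                rwa [sub_eq_zero] at h
              exact_mod_cast this
            · exact h
          rw [hcoef, zero_smul]
          exact Submodule.zero_mem _
      · rw [Submodule.span_le]
        rintro y ⟨⟨k, hk⟩, rfl⟩
        refine (memiff _ _).mpr ?_
        rw [hFdef]
        show Φ ((u k : V) : H) = (t:ℂ) • ((u k : V) : H)
        rw [hu k, hk]
    rw [hspan, finrank_span_eq_card hFo.linearIndependent, hcntdef]
    simp [Fintype.card_subtype]
  -- finite dimensionality of the kernels
  have hkerV : ∀ s : ℝ, s ≠ 0 → LinearMap.ker ((Φ - (s : ℂ) • 1 : H →L[ℂ] H) : H →ₗ[ℂ] H) ≤ V := by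
    intro s hs x hx
    have hΦx : Φ x = (s : ℂ) • x := (memiff _ _).mp hx
    refine ⟨(s:ℂ)⁻¹ • x, ?_⟩
    rw [ContinuousLinearMap.coe_coe, map_smul, hΦx, smul_smul, inv_mul_cancel₀ (by exact_mod_cast hs), one_smul]
  -- symmetry of multiplicities via B
  have hsymm : ∀ t : ℝ, t ≠ 0 → t ^ 2 ≠ 1 → cnt t = cnt (-t) := by
    have hinj : ∀ s : ℝ, s ≠ 0 → s ^ 2 ≠ 1 →
        Module.finrank ℂ (LinearMap.ker ((Φ - (s : ℂ) • 1 : H →L[ℂ] H) : H →ₗ[ℂ] H)) ≤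
          Module.finrank ℂ (LinearMap.ker ((Φ - ((-s : ℝ) : ℂ) • 1 : H →L[ℂ] H) : H →ₗ[ℂ] H)) := by
      intro s hs hs1
      haveI : FiniteDimensional ℂ (LinearMap.ker ((Φ - ((-s:ℝ) : ℂ) • 1 : H →L[ℂ] H) : H →ₗ[ℂ] H)) :=
        Submodule.finiteDimensional_of_le (hkerV (-s) (neg_ne_zero.mpr hs))
      have hBmem : ∀ x ∈ LinearMap.ker ((Φ - (s:ℂ) • 1 : H →L[ℂ] H) : H →ₗ[ℂ] H),
          B x ∈ LinearMap.ker ((Φ - ((-s:ℝ):ℂ) • 1 : H →L[ℂ] H) : H →ₗ[ℂ] H) := by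
        intro x hx
        have hΦx : Φ x = (s:ℂ) • x := (memiff _ _).mp hx
        have hΦBx : Φ (B x) = -((s:ℂ) • B x) := by
          have h := congrArg (fun S : H →L[ℂ] H => S x) hBΦ
          simp only [mul_apply_eq_comp, neg_apply] at h
          rw [h, hΦx, map_smul]
        refine (memiff _ _).mpr ?_
        rw [hΦBx]
        push_cast
        rw [neg_smul]
      set b := (B : H →ₗ[ℂ] H).restrict hBmem with hbdef
      have hb_inj : Function.Injective b := by
        intro a b' hab
        have h1 : B (a : H) = B (b' : H) := by
          have := congrArg (fun z : (LinearMap.ker ((Φ - ((-s:ℝ):ℂ) • 1 : H →L[ℂ] H) : H →ₗ[ℂ] H)) => (z : H)) hab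
          exact this
        have h2 : B ((a : H) - (b' : H)) = 0 := by rw [map_sub, h1, sub_self]
        have h3 : (a : H) - (b' : H) ∈ LinearMap.ker ((Φ - (s:ℂ) • 1 : H →L[ℂ] H) : H →ₗ[ℂ] H) :=
          Submodule.sub_mem _ a.2 b'.2
        have hΦd : Φ ((a:H) - (b':H)) = (s:ℂ) • ((a:H) - (b':H)) := (memiff _ _).mp h3
        set d : H := (a : H) - (b' : H) with hddef
        have h4 : d - Φ (Φ d) = 0 := by
          have h := congrArg (fun S : H →L[ℂ] H => S d) hB2
          simp only [mul_apply_eq_comp, sub_apply, one_apply_eq_self] at h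
          rw [← h, h2, map_zero]
        have h5 : Φ (Φ d) = ((s:ℂ) ^ 2) • d := by
          rw [hΦd, map_smul, hΦd, smul_smul, ← pow_two]
        have h6 : ((1:ℂ) - (s:ℂ)^2) • d = 0 := by
          rw [sub_smul, one_smul, ← h5, h4]
        have h7 : ((1:ℂ) - (s:ℂ)^2) ≠ 0 := by
          intro hcon
          apply hs1
          have hr : ((1 - s^2 : ℝ) : ℂ) = 0 := by push_cast; linear_combination hcon
          have := Complex.ofReal_eq_zero.mp hr
          linarith [this]
        have hd0 : d = 0 := by
          rcases smul_eq_zero.mp h6 with h | h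
          · exact absurd h h7
          · exact h
        exact Subtype.ext (by rw [← sub_eq_zero]; exact hd0)
      exact LinearMap.finrank_le_finrank_of_injective hb_inj
    intro t ht ht1
    have e1 := hinj t ht ht1
    have e2 := hinj (-t) (neg_ne_zero.mpr ht) (by rwa [neg_sq])
    rw [show (-(-t) : ℝ) = t from neg_neg t] at e2
    rw [← hker_count t ht, ← hker_count (-t) (neg_ne_zero.mpr ht)]
    exact le_antisymm e1 e2
  -- a value t is attained iff cnt t ≠ 0
  have hmem_iff : ∀ t : ℝ, t ∈ Finset.univ.image μ ↔ cnt t ≠ 0 := by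
    intro t
    rw [hcntdef]
    simp only [Finset.mem_image, Finset.mem_univ, true_and, ne_eq,
      Finset.card_eq_zero, ← Finset.nonempty_iff_ne_empty, Finset.filter_nonempty_iff]
  -- the eigenvalue sum
  have hsum3 : ∑ k, (μ k) ^ 3 = (cnt 1 : ℝ) - (cnt (-1) : ℝ) := by
    rw [Finset.sum_comp (fun t : ℝ => t ^ 3) μ]
    have hsplit := Finset.sum_filter_add_sum_filter_not (Finset.univ.image μ)
      (fun t : ℝ => t ^ 2 = 1)
      (fun t : ℝ => (Finset.univ.filter fun k => μ k = t).card • t ^ 3)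
    rw [← hsplit]
    have hpart2 : ∑ t ∈ (Finset.univ.image μ).filter (fun t => ¬ t ^ 2 = 1),
        (Finset.univ.filter fun k => μ k = t).card • t ^ 3 = 0 := by
      apply Finset.sum_involution (fun t _ => -t)
      · intro t ht
        by_cases h0 : t = 0
        · simp [h0]
        · have ht1 : t ^ 2 ≠ 1 := (Finset.mem_filter.mp ht).2
          have hsy := hsymm t h0 ht1
          simp only [hcntdef] at hsy
          simp only [nsmul_eq_mul]
          rw [← hsy]
          ring
      · intro t ht hne hcon
        have h0 : t = 0 := by linarith [hcon]
        apply hne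
        simp [h0]
      · intro t _; exact neg_neg t
      · intro t ht
        have htmem := Finset.mem_filter.mp ht
        have ht1 : t ^ 2 ≠ 1 := htmem.2
        rw [Finset.mem_filter]
        constructor
        · by_cases h0 : t = 0
          · rw [h0, neg_zero]; exact h0 ▸ htmem.1
          · rw [hmem_iff, ← hsymm t h0 ht1, ← hmem_iff]
            exact htmem.1
        · rwa [neg_sq]
    rw [hpart2, add_zero]
    have hsub : (Finset.univ.image μ).filter (fun t : ℝ => t ^ 2 = 1)
        ⊆ ({1, -1} : Finset ℝ) := by
      intro t ht
      have h1 : t ^ 2 = 1 := (Finset.mem_filter.mp ht).2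
      have h2 : (t - 1) * (t + 1) = 0 := by ring_nf; linarith
      rcases mul_eq_zero.mp h2 with h | h
      · simp [show t = 1 by linarith]
      · simp [show t = -1 by linarith]
    rw [Finset.sum_subset hsub]
    · rw [Finset.sum_pair (by norm_num : (1:ℝ) ≠ -1)]
      simp only [hcntdef, nsmul_eq_mul]
      push_cast
      ring
    · intro t htmem htnot
      have ht1 : t ^ 2 = 1 := by
        rcases Finset.mem_insert.mp htmem with h | h
        · rw [h]; norm_num
        · rw [Finset.mem_singleton.mp h]; norm_num
      have hnotI : t ∉ Finset.univ.image μ :=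
        fun hmem => htnot (Finset.mem_filter.mpr ⟨hmem, ht1⟩)
      have hc0 : cnt t = 0 := by
        by_contra hc
        exact hnotI ((hmem_iff t).mpr hc)
      simp only [hcntdef] at hc0
      rw [hc0]
      simp
  -- identify cnt 1 and cnt (-1) with the kernel dimensions
  have hm : Module.finrank ℂ (LinearMap.ker ((Φ - 1 : H →L[ℂ] H) : H →ₗ[ℂ] H)) = cnt 1 := by
    have h := hker_count 1 one_ne_zero
    rw [show (((1:ℝ):ℂ)) = (1:ℂ) by norm_num, one_smul] at h
    exact h
  have hn : Module.finrank ℂ (LinearMap.ker ((Φ + 1 : H →L[ℂ] H) : H →ₗ[ℂ] H)) = cnt (-1) := by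
    have h := hker_count (-1) (by norm_num)
    rw [show ((((-1):ℝ):ℂ)) = (-1:ℂ) by norm_num, neg_smul, one_smul,
      sub_neg_eq_add] at h
    exact h
  -- conclude
  have hHS := hasSum_inner_diag T u hrange e
  have hval : (∑ k, ⟪(u k : H), T (u k : H)⟫) =
      (((Module.finrank ℂ (LinearMap.ker ((Φ - 1 : H →L[ℂ] H) : H →ₗ[ℂ] H)) : ℤ)
        - (Module.finrank ℂ (LinearMap.ker ((Φ + 1 : H →L[ℂ] H) : H →ₗ[ℂ] H)) : ℤ) : ℤ) : ℂ) := by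
    rw [Finset.sum_congr rfl (fun k _ => hdiag k)]
    rw [hm, hn]
    have hcast : (∑ k, ((μ k : ℂ)) ^ 3) = (((∑ k, (μ k) ^ 3 : ℝ)) : ℂ) := by
      push_cast
      rfl
    rw [hcast, hsum3]
    push_cast
    ring
  rw [← hval]
  exact hHS
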